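/- For every prime power q there exists a 3-(q²+1, q+1, 1) design, i.e., a family of (q+1)-element subsets (blocks) of a (q²+1)-element point set such that every 3-element subset of points is contained in exactly one block. -/

import Mathlib

set_option linter.unusedSectionVars false
set_option linter.unnecessarySeqFocus false
set_option maxHeartbeats 1000000

open Matrix Projectivization
open scoped LinearAlgebra.Projectivization

namespace CircleGeom


variable {K : Type*} [Field K] [Fintype K] [DecidableEq K]

abbrev Pt (K : Type*) [Field K] := ℙ K (Fin 2 → K)

/-- determinant-like pairing -/
def D (u v : Fin 2 → K) : K := u 0 * v 1 - u 1 * v 0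

lemma vec_eq_zero_iff (v : Fin 2 → K) : v = 0 ↔ v 0 = 0 ∧ v 1 = 0 := by
  constructor
  · rintro rfl; simp
  · rintro ⟨h0, h1⟩; funext i; fin_cases i <;> simpa

lemma mk_eq_of_D_eq_zero {u v : Fin 2 → K} (hu : u ≠ 0) (hv : v ≠ 0) (h : D u v = 0) :
    Projectivization.mk K u hu = Projectivization.mk K v hv := by
  rw [mk_eq_mk_iff']
  rcases (not_and_or.mp ((vec_eq_zero_iff v).not.mp hv)) with h0 | h1
  · refine ⟨u 0 / v 0, ?_⟩
    funext i; fin_cases i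
    · simp [div_mul_cancel₀, h0]
    · show u 0 / v 0 * v 1 = u 1
      field_simp
      unfold D at h; linear_combination h
  · refine ⟨u 1 / v 1, ?_⟩
    funext i; fin_cases i
    · show u 1 / v 1 * v 0 = u 0
      field_simp
      unfold D at h; linear_combination -h
    · simp [div_mul_cancel₀, h1]

lemma D_ne_zero {u v : Fin 2 → K} (hu : u ≠ 0) (hv : v ≠ 0)
    (h : Projectivization.mk K u hu ≠ Projectivization.mk K v hv) : D u v ≠ 0 :=
  fun hD => h (mk_eq_of_D_eq_zero hu hv hD)

lemma decomp (u v w : Fin 2 → K) (h : D u v ≠ 0) :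
    w = (D w v / D u v) • u + (D u w / D u v) • v := by
  unfold D at *
  funext i; fin_cases i <;>
  · simp only [Fin.zero_eta, Fin.mk_one, Pi.add_apply, Pi.smul_apply, smul_eq_mul]
    rw [div_mul_eq_mul_div, div_mul_eq_mul_div, ← add_div, eq_div_iff h]
    ring

/-- matrix with columns u, v -/
def colMat (u v : Fin 2 → K) : Matrix (Fin 2) (Fin 2) K :=
  Matrix.of ![![u 0, v 0], ![u 1, v 1]]

lemma colMat_det (u v : Fin 2 → K) : (colMat u v).det = D u v := by
  rw [Matrix.det_fin_two]; unfold colMat D; simp; ring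

lemma colMat_mulVec (u v x : Fin 2 → K) :
    (colMat u v).mulVec x = x 0 • u + x 1 • v := by
  funext i
  fin_cases i <;>
  · show _ = _
    simp [colMat, Matrix.mulVec, dotProduct, Fin.sum_univ_two]
    ring


noncomputable def act (g : (Matrix (Fin 2) (Fin 2) K)ˣ) (x : Pt K) : Pt K :=
  Projectivization.map (Matrix.mulVecLin (g : Matrix (Fin 2) (Fin 2) K))
    (by
      have h : Function.Injective ((g : Matrix (Fin 2) (Fin 2) K).mulVec) :=
        Matrix.mulVec_injective_iff_isUnit.2 ⟨g, rfl⟩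
      exact fun a b hab => h hab) x

lemma act_mk (g : (Matrix (Fin 2) (Fin 2) K)ˣ) (v : Fin 2 → K) (hv : v ≠ 0)
    (h' : (g : Matrix (Fin 2) (Fin 2) K).mulVec v ≠ 0) :
    act g (Projectivization.mk K v hv) = Projectivization.mk K ((g : Matrix (Fin 2) (Fin 2) K).mulVec v) h' := by
  exact Projectivization.map_mk _ _ _ _

lemma mulVec_ne_zero (g : (Matrix (Fin 2) (Fin 2) K)ˣ) {v : Fin 2 → K} (hv : v ≠ 0) :
    (g : Matrix (Fin 2) (Fin 2) K).mulVec v ≠ 0 := by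
  intro h
  apply hv
  have : Function.Injective ((g : Matrix (Fin 2) (Fin 2) K).mulVec) :=
    Matrix.mulVec_injective_iff_isUnit.2 ⟨g, rfl⟩
  apply this
  simpa using h

lemma act_mul (g h : (Matrix (Fin 2) (Fin 2) K)ˣ) (x : Pt K) :
    act (g * h) x = act g (act h x) := by
  induction x using Projectivization.ind with
  | h v hv =>
    rw [act_mk _ _ _ (mulVec_ne_zero _ hv),
      act_mk _ _ _ (mulVec_ne_zero _ hv),
      act_mk _ _ _ (mulVec_ne_zero _ (mulVec_ne_zero _ hv))]
    congr 1
    rw [Matrix.mulVec_mulVec]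
    rfl

lemma act_one (x : Pt K) : act (1 : (Matrix (Fin 2) (Fin 2) K)ˣ) x = x := by
  induction x using Projectivization.ind with
  | h v hv =>
    rw [act_mk _ _ _ (mulVec_ne_zero _ hv)]
    congr 1 <;> simp [Matrix.one_mulVec]

lemma act_inv (g : (Matrix (Fin 2) (Fin 2) K)ˣ) (x : Pt K) :
    act g⁻¹ (act g x) = x := by
  rw [← act_mul, inv_mul_cancel, act_one]

lemma act_inv' (g : (Matrix (Fin 2) (Fin 2) K)ˣ) (x : Pt K) :
    act g (act g⁻¹ x) = x := by
  rw [← act_mul, mul_inv_cancel, act_one]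

lemma act_injective (g : (Matrix (Fin 2) (Fin 2) K)ˣ) :
    Function.Injective (act g) := by
  intro x y h
  have := congrArg (act g⁻¹) h
  rwa [act_inv, act_inv] at this


def ev0 : Fin 2 → K := ![1, 0]
def ev1 : Fin 2 → K := ![0, 1]
def ev2 : Fin 2 → K := ![1, 1]

lemma ev0_ne : (ev0 : Fin 2 → K) ≠ 0 := by
  intro h; have := congrFun h 0; simp [ev0] at this
lemma ev1_ne : (ev1 : Fin 2 → K) ≠ 0 := by
  intro h; have := congrFun h 1; simp [ev1] at this
lemma ev2_ne : (ev2 : Fin 2 → K) ≠ 0 := by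
  intro h; have := congrFun h 0; simp [ev2] at this

noncomputable def P0 : Pt K := Projectivization.mk K ev0 ev0_ne
noncomputable def P1 : Pt K := Projectivization.mk K ev1 ev1_ne
noncomputable def P2 : Pt K := Projectivization.mk K ev2 ev2_ne

variable (k : Subfield K)

/-- the standard subline -/
def S : Set (Pt K) :=
  {x | ∃ (v : Fin 2 → K) (hv : v ≠ 0), v 0 ∈ k ∧ v 1 ∈ k ∧ x = Projectivization.mk K v hv}

lemma P0_mem_S : (P0 : Pt K) ∈ S k :=
  ⟨ev0, ev0_ne, by simp [ev0], by simp [ev0], rfl⟩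
lemma P1_mem_S : (P1 : Pt K) ∈ S k :=
  ⟨ev1, ev1_ne, by simp [ev1], by simp [ev1], rfl⟩
lemma P2_mem_S : (P2 : Pt K) ∈ S k :=
  ⟨ev2, ev2_ne, by simp [ev2], by simp [ev2], rfl⟩

lemma S_top : S (⊤ : Subfield K) = Set.univ := by
  ext x
  simp only [Set.mem_univ, iff_true]
  induction x using Projectivization.ind with
  | h v hv => exact ⟨v, hv, trivial, trivial, rfl⟩

/-- rationality of a matrix over the subfield -/
def Rat (g : (Matrix (Fin 2) (Fin 2) K)ˣ) : Prop :=
  ∀ i j, (g : Matrix (Fin 2) (Fin 2) K) i j ∈ k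

lemma rat_mul {g h : (Matrix (Fin 2) (Fin 2) K)ˣ} (hg : Rat k g) (hh : Rat k h) :
    Rat k (g * h) := by
  intro i j
  rw [Units.val_mul, Matrix.mul_apply]
  exact Subfield.sum_mem k fun l _ => k.mul_mem (hg i l) (hh l j)

lemma rat_inv {g : (Matrix (Fin 2) (Fin 2) K)ˣ} (hg : Rat k g) : Rat k g⁻¹ := by
  have hdet : (g : Matrix (Fin 2) (Fin 2) K).det ∈ k := by
    rw [Matrix.det_fin_two]
    exact k.sub_mem (k.mul_mem (hg 0 0) (hg 1 1)) (k.mul_mem (hg 0 1) (hg 1 0))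
  intro i j
  rw [Matrix.coe_units_inv, Matrix.inv_def, Matrix.adjugate_fin_two]
  have hRi : Ring.inverse (g : Matrix (Fin 2) (Fin 2) K).det ∈ k := by
    rw [Ring.inverse_eq_inv']
    exact k.inv_mem hdet
  fin_cases i <;> fin_cases j <;>
    simp only [Matrix.smul_apply, smul_eq_mul, Matrix.cons_val', Matrix.cons_val_zero,
      Matrix.cons_val_one, Matrix.head_cons, Matrix.empty_val', Matrix.cons_val_fin_one,
      Matrix.head_fin_const] <;>
    first
      | exact k.mul_mem hRi (hg 1 1)
      | exact k.mul_mem hRi (k.neg_mem (hg 0 1))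
      | exact k.mul_mem hRi (k.neg_mem (hg 1 0))
      | exact k.mul_mem hRi (hg 0 0)


lemma mulVec_ev0 (M : Matrix (Fin 2) (Fin 2) K) : M.mulVec ev0 = fun i => M i 0 := by
  funext i; simp [ev0, Matrix.mulVec, dotProduct, Fin.sum_univ_two]

lemma mulVec_ev1 (M : Matrix (Fin 2) (Fin 2) K) : M.mulVec ev1 = fun i => M i 1 := by
  funext i; simp [ev1, Matrix.mulVec, dotProduct, Fin.sum_univ_two]

lemma mulVec_ev2 (M : Matrix (Fin 2) (Fin 2) K) : M.mulVec ev2 = fun i => M i 0 + M i 1 := by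
  funext i; simp [ev2, Matrix.mulVec, dotProduct, Fin.sum_univ_two]

lemma trans3 {x y z : Pt K} (hxy : x ≠ y) (hxz : x ≠ z) (hyz : y ≠ z)
    (hx : x ∈ S k) (hy : y ∈ S k) (hz : z ∈ S k) :
    ∃ g, Rat k g ∧ act g P0 = x ∧ act g P1 = y ∧ act g P2 = z := by
  obtain ⟨u, hu, hu0, hu1, rfl⟩ := hx
  obtain ⟨v, hv, hv0, hv1, rfl⟩ := hy
  obtain ⟨w, hw, hw0, hw1, rfl⟩ := hz
  have hD : D u v ≠ 0 := D_ne_zero hu hv hxy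
  set a : K := D w v / D u v with ha_def
  set b : K := D u w / D u v with hb_def
  have hDmem : D u v ∈ k := k.sub_mem (k.mul_mem hu0 hv1) (k.mul_mem hu1 hv0)
  have hamem : a ∈ k :=
    k.div_mem (k.sub_mem (k.mul_mem hw0 hv1) (k.mul_mem hw1 hv0)) hDmem
  have hbmem : b ∈ k :=
    k.div_mem (k.sub_mem (k.mul_mem hu0 hw1) (k.mul_mem hu1 hw0)) hDmem
  have ha : a ≠ 0 := by
    intro h0
    rw [ha_def, div_eq_zero_iff] at h0
    rcases h0 with h0 | h0
    · exact hyz (mk_eq_of_D_eq_zero hw hv h0).symm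
    · exact hD h0
  have hb : b ≠ 0 := by
    intro h0
    rw [hb_def, div_eq_zero_iff] at h0
    rcases h0 with h0 | h0
    · exact hxz (mk_eq_of_D_eq_zero hu hw h0)
    · exact hD h0
  have hw_eq : w = a • u + b • v := decomp u v w hD
  set M := colMat (a • u) (b • v) with hM_def
  have hdet : M.det ≠ 0 := by
    rw [hM_def, colMat_det]
    have : D (a • u) (b • v) = a * b * D u v := by
      unfold D; simp only [Pi.smul_apply, smul_eq_mul]; ring
    rw [this]
    exact mul_ne_zero (mul_ne_zero ha hb) hD
  refine ⟨Matrix.nonsingInvUnit M (isUnit_iff_ne_zero.2 hdet), ?_, ?_, ?_, ?_⟩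
  · intro i j
    have : (↑(Matrix.nonsingInvUnit M (isUnit_iff_ne_zero.2 hdet)) :
        Matrix (Fin 2) (Fin 2) K) = M := rfl
    rw [this, hM_def]
    fin_cases i <;> fin_cases j <;>
      simp [colMat, Matrix.of_apply] <;>
      exact k.mul_mem (by assumption) (by assumption)
  · have h0 : M.mulVec ev0 = a • u := by
      rw [hM_def, colMat_mulVec]; simp [ev0]
    rw [P0, act_mk _ _ _ (by
      show M.mulVec ev0 ≠ 0
      rw [h0]; exact smul_ne_zero ha hu)]
    rw [mk_eq_mk_iff']
    exact ⟨a, h0.symm⟩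
  · have h1 : M.mulVec ev1 = b • v := by
      rw [hM_def, colMat_mulVec]; simp [ev1]
    rw [P1, act_mk _ _ _ (by
      show M.mulVec ev1 ≠ 0
      rw [h1]; exact smul_ne_zero hb hv)]
    rw [mk_eq_mk_iff']
    exact ⟨b, h1.symm⟩
  · have h2 : M.mulVec ev2 = w := by
      rw [hM_def, colMat_mulVec]; simp [ev2]; exact hw_eq.symm
    rw [P2, act_mk _ _ _ (by
      show M.mulVec ev2 ≠ 0
      rw [h2]; exact hw)]
    rw [mk_eq_mk_iff']
    exact ⟨1, by rw [one_smul]; exact h2.symm⟩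

lemma fix_base {g : (Matrix (Fin 2) (Fin 2) K)ˣ}
    (h0 : act g P0 = (P0 : Pt K)) (h1 : act g P1 = P1) (h2 : act g P2 = P2) :
    ∀ x : Pt K, act g x = x := by
  set M := (g : Matrix (Fin 2) (Fin 2) K) with hM_def
  rw [P0, act_mk _ _ _ (mulVec_ne_zero _ ev0_ne), mk_eq_mk_iff'] at h0
  rw [P1, act_mk _ _ _ (mulVec_ne_zero _ ev1_ne), mk_eq_mk_iff'] at h1
  rw [P2, act_mk _ _ _ (mulVec_ne_zero _ ev2_ne), mk_eq_mk_iff'] at h2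
  obtain ⟨c0, hc0⟩ := h0
  obtain ⟨c1, hc1⟩ := h1
  obtain ⟨c2, hc2⟩ := h2
  rw [mulVec_ev0] at hc0
  rw [mulVec_ev1] at hc1
  rw [mulVec_ev2] at hc2
  have e00 : c0 = M 0 0 := by simpa [ev0] using congrFun hc0 0
  have e10 : (0 : K) = M 1 0 := by simpa [ev0] using congrFun hc0 1
  have e01 : (0 : K) = M 0 1 := by simpa [ev1] using congrFun hc1 0
  have e11 : c1 = M 1 1 := by simpa [ev1] using congrFun hc1 1
  have e0 : c2 = M 0 0 + M 0 1 := by simpa [ev2] using congrFun hc2 0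
  have e1 : c2 = M 1 0 + M 1 1 := by simpa [ev2] using congrFun hc2 1
  have hM00 : M 0 0 = c2 := by rw [e0, ← e01, add_zero]
  have hM11 : M 1 1 = c2 := by rw [e1, ← e10, zero_add]
  have hc2ne : c2 ≠ 0 := by
    intro h
    have hdet : IsUnit M.det := (Matrix.isUnit_iff_isUnit_det M).1 ⟨g, rfl⟩
    rw [Matrix.det_fin_two, hM00, hM11, ← e01, ← e10, h] at hdet
    simp at hdet
  have hM : M = c2 • (1 : Matrix (Fin 2) (Fin 2) K) := by
    ext i j
    fin_cases i <;> fin_cases j <;>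
      simp only [Matrix.smul_apply, Matrix.one_apply, smul_eq_mul] <;>
      norm_num <;>
      first
        | exact hM00
        | exact e01.symm
        | exact e10.symm
        | exact hM11
  intro x
  induction x using Projectivization.ind with
  | h v hv =>
    rw [act_mk _ _ _ (mulVec_ne_zero _ hv), mk_eq_mk_iff']
    refine ⟨c2, ?_⟩
    show c2 • v = M.mulVec v
    rw [hM, Matrix.smul_mulVec, Matrix.one_mulVec]

lemma fix_three {g : (Matrix (Fin 2) (Fin 2) K)ˣ} {x y z : Pt K}
    (hxy : x ≠ y) (hxz : x ≠ z) (hyz : y ≠ z)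
    (hgx : act g x = x) (hgy : act g y = y) (hgz : act g z = z) :
    ∀ w : Pt K, act g w = w := by
  obtain ⟨h, -, hh0, hh1, hh2⟩ :=
    trans3 (⊤ : Subfield K) hxy hxz hyz
      (by rw [S_top]; trivial) (by rw [S_top]; trivial) (by rw [S_top]; trivial)
  have key : ∀ w : Pt K, act (h⁻¹ * g * h) w = w → True := fun _ _ => trivial
  have hg' : ∀ i : Pt K, act h i = x ∨ act h i = y ∨ act h i = z →
      act (h⁻¹ * (g * h)) i = i := by
    intro i hi
    rw [act_mul, act_mul]
    rcases hi with hi | hi | hi <;> rw [hi] <;>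
      [rw [hgx]; rw [hgy]; rw [hgz]] <;> rw [← hi, act_inv]
  have h0 : act (h⁻¹ * (g * h)) P0 = (P0 : Pt K) := hg' _ (Or.inl hh0)
  have h1 : act (h⁻¹ * (g * h)) P1 = (P1 : Pt K) := hg' _ (Or.inr (Or.inl hh1))
  have h2 : act (h⁻¹ * (g * h)) P2 = (P2 : Pt K) := hg' _ (Or.inr (Or.inr hh2))
  have hall := fix_base h0 h1 h2
  intro w
  have : act g w = act h (act (h⁻¹ * (g * h)) (act h⁻¹ w)) := by
    rw [← act_mul, ← act_mul]
    have : h * (h⁻¹ * (g * h)) * h⁻¹ = g := by group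
    rw [this]
  rw [this, hall, act_inv']

lemma rat_act_mem {g : (Matrix (Fin 2) (Fin 2) K)ˣ} (hg : Rat k g) {x : Pt K}
    (hx : x ∈ S k) : act g x ∈ S k := by
  obtain ⟨v, hv, h0, h1, rfl⟩ := hx
  refine ⟨(g : Matrix (Fin 2) (Fin 2) K).mulVec v, mulVec_ne_zero g hv, ?_, ?_,
    (act_mk _ _ _ (mulVec_ne_zero g hv))⟩
  · have : (g : Matrix (Fin 2) (Fin 2) K).mulVec v 0 =
        (g : Matrix (Fin 2) (Fin 2) K) 0 0 * v 0 +
        (g : Matrix (Fin 2) (Fin 2) K) 0 1 * v 1 := by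
      simp [Matrix.mulVec, dotProduct, Fin.sum_univ_two]
    rw [this]
    exact k.add_mem (k.mul_mem (hg 0 0) h0) (k.mul_mem (hg 0 1) h1)
  · have : (g : Matrix (Fin 2) (Fin 2) K).mulVec v 1 =
        (g : Matrix (Fin 2) (Fin 2) K) 1 0 * v 0 +
        (g : Matrix (Fin 2) (Fin 2) K) 1 1 * v 1 := by
      simp [Matrix.mulVec, dotProduct, Fin.sum_univ_two]
    rw [this]
    exact k.add_mem (k.mul_mem (hg 1 0) h0) (k.mul_mem (hg 1 1) h1)

/-- circle determined by `g` -/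
def C (g : (Matrix (Fin 2) (Fin 2) K)ˣ) : Set (Pt K) := act g '' S k

lemma mem_C_iff {g : (Matrix (Fin 2) (Fin 2) K)ˣ} {w : Pt K} :
    w ∈ C k g ↔ act g⁻¹ w ∈ S k := by
  constructor
  · rintro ⟨s, hs, rfl⟩
    rwa [act_inv]
  · intro h
    exact ⟨act g⁻¹ w, h, act_inv' g w⟩

lemma circles_eq {g1 g2 : (Matrix (Fin 2) (Fin 2) K)ˣ} {x y z : Pt K}
    (hxy : x ≠ y) (hxz : x ≠ z) (hyz : y ≠ z)
    (hx1 : x ∈ C k g1) (hy1 : y ∈ C k g1) (hz1 : z ∈ C k g1)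
    (hx2 : x ∈ C k g2) (hy2 : y ∈ C k g2) (hz2 : z ∈ C k g2) :
    C k g1 = C k g2 := by
  have hxy1 : act g1⁻¹ x ≠ act g1⁻¹ y := fun h => hxy (act_injective g1⁻¹ h)
  have hxz1 : act g1⁻¹ x ≠ act g1⁻¹ z := fun h => hxz (act_injective g1⁻¹ h)
  have hyz1 : act g1⁻¹ y ≠ act g1⁻¹ z := fun h => hyz (act_injective g1⁻¹ h)
  have hxy2 : act g2⁻¹ x ≠ act g2⁻¹ y := fun h => hxy (act_injective g2⁻¹ h)
  have hxz2 : act g2⁻¹ x ≠ act g2⁻¹ z := fun h => hxz (act_injective g2⁻¹ h)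
  have hyz2 : act g2⁻¹ y ≠ act g2⁻¹ z := fun h => hyz (act_injective g2⁻¹ h)
  obtain ⟨h1, hr1, a0, a1, a2⟩ := trans3 k hxy1 hxz1 hyz1
    ((mem_C_iff k).1 hx1) ((mem_C_iff k).1 hy1) ((mem_C_iff k).1 hz1)
  obtain ⟨h2, hr2, b0, b1, b2⟩ := trans3 k hxy2 hxz2 hyz2
    ((mem_C_iff k).1 hx2) ((mem_C_iff k).1 hy2) ((mem_C_iff k).1 hz2)
  set u := g2 * ((h2 * h1⁻¹) * g1⁻¹) with hu_def
  have key : ∀ (w : Pt K) (e1 : act h1 P0 = act g1⁻¹ w) (e2 : act h2 P0 = act g2⁻¹ w)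
      (P : Pt K), P = P0 → act u w = w := by
    intro w e1 e2 P hP
    rw [hu_def, act_mul, act_mul, act_mul]
    rw [← e1, act_inv, e2, act_inv']
  have ux : act u x = x := by
    rw [hu_def, act_mul, act_mul, act_mul, ← a0, act_inv, b0, act_inv']
  have uy : act u y = y := by
    rw [hu_def, act_mul, act_mul, act_mul, ← a1, act_inv, b1, act_inv']
  have uz : act u z = z := by
    rw [hu_def, act_mul, act_mul, act_mul, ← a2, act_inv, b2, act_inv']
  have hu : ∀ w : Pt K, act u w = w := fix_three hxy hxz hyz ux uy uz
  have hrat : Rat k (h2 * h1⁻¹) := rat_mul k hr2 (rat_inv k hr1)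
  ext w
  constructor
  · rintro ⟨s, hs, rfl⟩
    have : act g1 s = act g2 (act (h2 * h1⁻¹) s) := by
      conv_lhs => rw [← hu (act g1 s)]
      rw [hu_def, act_mul, act_mul, act_inv]
    rw [this]
    exact ⟨act (h2 * h1⁻¹) s, rat_act_mem k hrat hs, rfl⟩
  · rintro ⟨s, hs, rfl⟩
    have hu' : ∀ w : Pt K, act u⁻¹ w = w := by
      intro w
      conv_lhs => rw [← hu w]
      rw [act_inv]
    have : act g2 s = act g1 (act (h1 * h2⁻¹) s) := by
      conv_lhs => rw [← hu' (act g2 s)]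
      have : u⁻¹ = g1 * ((h1 * h2⁻¹) * g2⁻¹) := by rw [hu_def]; group
      rw [this, act_mul, act_mul, act_mul, act_inv, act_mul]
    rw [this]
    exact ⟨act (h1 * h2⁻¹) s, rat_act_mem k (rat_mul k hr1 (rat_inv k hr2)) hs, rfl⟩

lemma vec_a1_ne (a : K) : (![a, 1] : Fin 2 → K) ≠ 0 := by
  intro h
  have := congrFun h 1
  simp at this

noncomputable def sFun (k : Subfield K) : Option k → S k
  | none => ⟨P0, P0_mem_S k⟩
  | some a => ⟨Projectivization.mk K ![(a : K), 1] (vec_a1_ne _),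
      ⟨![(a : K), 1], vec_a1_ne _, by simpa using a.2, by simp, rfl⟩⟩

lemma sFun_bijective : Function.Bijective (sFun k) := by
  constructor
  · intro o1 o2 h
    have h' := congrArg Subtype.val h
    match o1, o2 with
    | none, none => rfl
    | none, some a =>
      exfalso
      simp only [sFun, P0] at h'
      rw [mk_eq_mk_iff'] at h'
      obtain ⟨c, hc⟩ := h'
      have h1 := congrFun hc 1
      have h0 := congrFun hc 0
      simp [ev0] at h0 h1
      rw [h1] at h0
      simp at h0
    | some a, none =>
      exfalso
      simp only [sFun, P0] at h'
      rw [mk_eq_mk_iff'] at h'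
      obtain ⟨c, hc⟩ := h'
      have h1 := congrFun hc 1
      simp [ev0] at h1
    | some a, some b =>
      congr 1
      ext
      simp only [sFun] at h'
      rw [mk_eq_mk_iff'] at h'
      obtain ⟨c, hc⟩ := h'
      have h1 := congrFun hc 1
      have h0 := congrFun hc 0
      simp at h0 h1
      rw [h1, one_mul] at h0
      exact h0.symm
  · rintro ⟨x, v, hv, h0, h1, rfl⟩
    by_cases hv1 : v 1 = 0
    · have hv0 : v 0 ≠ 0 := by
        intro h'
        exact hv ((vec_eq_zero_iff v).2 ⟨h', hv1⟩)
      refine ⟨none, ?_⟩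
      apply Subtype.ext
      show P0 = Projectivization.mk K v hv
      rw [P0, mk_eq_mk_iff']
      refine ⟨(v 0)⁻¹, ?_⟩
      funext i
      fin_cases i
      · show (v 0)⁻¹ * v 0 = _
        rw [inv_mul_cancel₀ hv0]; rfl
      · show (v 0)⁻¹ * v 1 = _
        rw [hv1, mul_zero]; rfl
    · refine ⟨some ⟨v 0 * (v 1)⁻¹, k.mul_mem h0 (k.inv_mem h1)⟩, ?_⟩
      apply Subtype.ext
      show Projectivization.mk K ![v 0 * (v 1)⁻¹, 1] _ = Projectivization.mk K v hv
      rw [mk_eq_mk_iff']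
      refine ⟨(v 1)⁻¹, ?_⟩
      funext i
      fin_cases i
      · show (v 1)⁻¹ * v 0 = _
        simp [mul_comm]
      · show (v 1)⁻¹ * v 1 = _
        rw [inv_mul_cancel₀ hv1]
        simp

lemma ncard_S : (S k).ncard = Nat.card k + 1 := by
  classical
  rw [← Nat.card_coe_set_eq]
  rw [Nat.card_congr (Equiv.ofBijective _ (sFun_bijective k)).symm]
  have : Fintype (↥k) := Fintype.ofFinite _
  rw [Nat.card_eq_fintype_card, Fintype.card_option, Nat.card_eq_fintype_card]

lemma ncard_C (g : (Matrix (Fin 2) (Fin 2) K)ˣ) : (C k g).ncard = Nat.card k + 1 := by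
  rw [C, Set.ncard_image_of_injective _ (act_injective g), ncard_S]

instance : Finite (Pt K) := by
  unfold Pt Projectivization
  infer_instance

theorem design (k : Subfield K) :
    ∃ B : Finset (Finset (Pt K)),
      (∀ b ∈ B, b.card = Nat.card k + 1) ∧
      ∀ x y z : Pt K, x ≠ y → x ≠ z → y ≠ z →
        ∃! b, b ∈ B ∧ x ∈ b ∧ y ∈ b ∧ z ∈ b := by
  classical
  set Cfin : (Matrix (Fin 2) (Fin 2) K)ˣ → Finset (Pt K) :=
    fun g => (Set.toFinite (C k g)).toFinset with hCfin
  refine ⟨(Set.toFinite (Set.range Cfin)).toFinset, ?_, ?_⟩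
  · intro b hb
    rw [Set.Finite.mem_toFinset, Set.mem_range] at hb
    obtain ⟨g, rfl⟩ := hb
    rw [hCfin]
    rw [← Set.ncard_eq_toFinset_card (C k g) (Set.toFinite _)]
    exact ncard_C k g
  · intro x y z hxy hxz hyz
    obtain ⟨g, -, hg0, hg1, hg2⟩ :=
      trans3 (⊤ : Subfield K) hxy hxz hyz
        (by rw [S_top]; trivial) (by rw [S_top]; trivial) (by rw [S_top]; trivial)
    have hmem : ∀ w : Pt K, w ∈ Cfin g ↔ w ∈ C k g := fun w => Set.Finite.mem_toFinset _
    refine ⟨Cfin g, ⟨?_, ?_, ?_, ?_⟩, ?_⟩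
    · rw [Set.Finite.mem_toFinset, Set.mem_range]; exact ⟨g, rfl⟩
    · rw [hmem]; exact ⟨P0, P0_mem_S k, hg0⟩
    · rw [hmem]; exact ⟨P1, P1_mem_S k, hg1⟩
    · rw [hmem]; exact ⟨P2, P2_mem_S k, hg2⟩
    · rintro b ⟨hb, hxb, hyb, hzb⟩
      rw [Set.Finite.mem_toFinset, Set.mem_range] at hb
      obtain ⟨g', rfl⟩ := hb
      have hmem' : ∀ w : Pt K, w ∈ Cfin g' ↔ w ∈ C k g' := fun w => Set.Finite.mem_toFinset _
      have hxC : x ∈ C k g' := (hmem' x).1 hxb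
      have hyC : y ∈ C k g' := (hmem' y).1 hyb
      have hzC : z ∈ C k g' := (hmem' z).1 hzb
      have hxg : x ∈ C k g := ⟨P0, P0_mem_S k, hg0⟩
      have hyg : y ∈ C k g := ⟨P1, P1_mem_S k, hg1⟩
      have hzg : z ∈ C k g := ⟨P2, P2_mem_S k, hg2⟩
      have := circles_eq k hxy hxz hyz hxC hyC hzC hxg hyg hzg
      ext w
      rw [hmem', hmem, this]

theorem design_card (k : Subfield K) : Nat.card (Pt K) = Nat.card K + 1 := by
  classical
  have h1 : (S (⊤ : Subfield K)).ncard = Nat.card (⊤ : Subfield K) + 1 := ncard_S ⊤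
  rw [S_top] at h1
  rw [Set.ncard_univ] at h1
  rw [h1]
  congr 1
  exact Nat.card_congr Subfield.topEquiv.toEquiv

section FieldPart

open Polynomial

variable {K : Type*} [Field K] [Fintype K] (p : ℕ) [Fact p.Prime] [CharP K p] (e : ℕ)

/-- The subfield of elements fixed by `x ↦ x ^ p ^ e`. -/
def fixedSubfield : Subfield K where
  carrier := {x | x ^ p ^ e = x}
  mul_mem' := by
    intro a b (ha : _ = _) (hb : _ = _)
    show (a * b) ^ p ^ e = a * b
    rw [mul_pow, ha, hb]
  one_mem' := by
    show (1 : K) ^ p ^ e = 1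
    rw [one_pow]
  add_mem' := by
    intro a b (ha : _ = _) (hb : _ = _)
    show (a + b) ^ p ^ e = a + b
    rw [add_pow_char_pow, ha, hb]
  zero_mem' := by
    show (0 : K) ^ p ^ e = 0
    exact zero_pow (pow_ne_zero _ (Nat.Prime.ne_zero Fact.out))
  neg_mem' := by
    intro a (ha : _ = _)
    show (-a) ^ p ^ e = -a
    calc (-a) ^ p ^ e = (0 - a) ^ p ^ e := by rw [zero_sub]
    _ = 0 ^ p ^ e - a ^ p ^ e := sub_pow_char_pow (p := p) (n := e) 0 a
    _ = -a := by rw [ha, zero_pow (pow_ne_zero _ (Nat.Prime.ne_zero Fact.out)), zero_sub]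
  inv_mem' := by
    intro a (ha : _ = _)
    show a⁻¹ ^ p ^ e = a⁻¹
    rw [inv_pow, ha]

lemma card_fixedSubfield (he : 0 < e) (hK : Fintype.card K = (p ^ e) ^ 2) :
    Nat.card (fixedSubfield (K := K) p e) = p ^ e := by
  classical
  set q : ℕ := p ^ e with hq
  have hp1 : 1 < p := Nat.Prime.one_lt Fact.out
  have hq1 : 1 < q := Nat.one_lt_pow he.ne' hp1
  set f : K[X] := X ^ q - X with hf
  have hdvd : f ∣ X ^ q ^ 2 - X := by
    have h1 : (X ^ (q - 1) - 1 : K[X]) ∣ (X ^ (q - 1)) ^ (q + 1) - 1 ^ (q + 1) :=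
      sub_dvd_pow_sub_pow _ _ _
    rw [one_pow, ← pow_mul] at h1
    have hexp : (q - 1) * (q + 1) = q ^ 2 - 1 := by
      obtain ⟨m, hm⟩ := Nat.exists_eq_add_of_le hq1.le
      rw [hm]
      have h1 : (1 + m) ^ 2 = m * m + 2 * m + 1 := by ring
      have h2 : (1 + m - 1) * (1 + m + 1) = m * m + 2 * m := by
        have : 1 + m - 1 = m := by omega
        rw [this]; ring
      omega
    rw [hexp] at h1
    have h2 := mul_dvd_mul_left (X : K[X]) h1
    have e1 : (X : K[X]) * (X ^ (q - 1) - 1) = X ^ q - X := by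
      rw [mul_sub, mul_one, ← pow_succ']
      congr 2
      omega
    have e2 : (X : K[X]) * (X ^ (q ^ 2 - 1) - 1) = X ^ q ^ 2 - X := by
      rw [mul_sub, mul_one, ← pow_succ']
      congr 2
      have : 1 ≤ q ^ 2 := Nat.one_le_pow _ _ (by omega)
      omega
    rwa [e1, e2] at h2
  obtain ⟨g, hg⟩ := hdvd
  have hf_ne : f ≠ 0 := FiniteField.X_pow_card_sub_X_ne_zero K hq1
  have hbig_ne : (X ^ q ^ 2 - X : K[X]) ≠ 0 :=
    FiniteField.X_pow_card_sub_X_ne_zero K (Nat.one_lt_pow two_ne_zero hq1)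
  have hg_ne : g ≠ 0 := by
    intro h
    rw [h, mul_zero] at hg
    exact hbig_ne hg
  have hdeg_f : f.natDegree = q := FiniteField.X_pow_card_sub_X_natDegree_eq K hq1
  have hdeg_big : (X ^ q ^ 2 - X : K[X]).natDegree = q ^ 2 :=
    FiniteField.X_pow_card_sub_X_natDegree_eq K (Nat.one_lt_pow two_ne_zero hq1)
  have hdeg_g : g.natDegree = q ^ 2 - q := by
    have := natDegree_mul hf_ne hg_ne
    rw [← hg, hdeg_big, hdeg_f] at this
    omega
  have hroots_big : (X ^ q ^ 2 - X : K[X]).roots = Finset.univ.val := by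
    have := FiniteField.roots_X_pow_card_sub_X K
    rwa [hK] at this
  have hcard_big : Multiset.card (X ^ q ^ 2 - X : K[X]).roots = q ^ 2 := by
    rw [hroots_big, ← Finset.card_def, Finset.card_univ, hK]
  have hroots_mul : (X ^ q ^ 2 - X : K[X]).roots = f.roots + g.roots := by
    rw [hg]
    exact roots_mul (hg ▸ hbig_ne)
  have hcard_le_f : Multiset.card f.roots ≤ q := hdeg_f ▸ f.card_roots'
  have hcard_le_g : Multiset.card g.roots ≤ q ^ 2 - q := hdeg_g ▸ g.card_roots'
  have hcard_f : Multiset.card f.roots = q := by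
    have := congrArg Multiset.card hroots_mul
    rw [hcard_big, Multiset.card_add] at this
    have hq2 : q ≤ q ^ 2 := Nat.le_self_pow two_ne_zero q
    omega
  have hsep : f.Separable := galois_poly_separable p q (dvd_pow_self p he.ne')
  have hnodup : f.roots.Nodup := nodup_roots hsep
  have hset : ((fixedSubfield (K := K) p e : Subfield K) : Set K) = ↑f.roots.toFinset := by
    ext x
    simp only [Finset.coe_sort_coe, Multiset.mem_toFinset, Finset.mem_coe, mem_roots hf_ne,
      IsRoot.def, hf, eval_sub, eval_pow, eval_X, sub_eq_zero]
    constructor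
    · intro hx
      exact (mem_roots hf_ne).2 (by simp only [IsRoot.def, hf, eval_sub, eval_pow, eval_X, sub_eq_zero]; exact hx)
    · intro hx
      have := (mem_roots hf_ne).1 hx
      simp only [IsRoot.def, hf, eval_sub, eval_pow, eval_X, sub_eq_zero] at this
      exact this
  have heq : Nat.card (fixedSubfield (K := K) p e) =
      Nat.card ((fixedSubfield (K := K) p e : Subfield K) : Set K) := rfl
  rw [heq, Nat.card_coe_set_eq, hset, Set.ncard_coe_finset,
    Multiset.toFinset_card_of_nodup hnodup, hcard_f]

end FieldPart

end CircleGeom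

/-- For every prime power `q` there exists a 3-(q²+1, q+1, 1) design (circle geometry). -/
theorem exists_circle_geometry (q : ℕ) (hq : ∃ p e : ℕ, p.Prime ∧ 0 < e ∧ q = p ^ e) :
    ∃ B : Finset (Finset (Fin (q ^ 2 + 1))),
      (∀ K ∈ B, K.card = q + 1) ∧
      ∀ T : Finset (Fin (q ^ 2 + 1)), T.card = 3 → ∃! K, K ∈ B ∧ T ⊆ K := by
  classical
  obtain ⟨p, e, hp, he, rfl⟩ := hq
  haveI : Fact p.Prime := ⟨hp⟩
  set F := GaloisField p (2 * e) with hF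
  haveI : Fintype F := Fintype.ofFinite _
  haveI : DecidableEq F := Classical.decEq _
  have hcard : Fintype.card F = (p ^ e) ^ 2 := by
    have h2 := GaloisField.card p (2 * e) (by omega)
    rw [Nat.card_eq_fintype_card] at h2
    rw [hF] at *
    rw [h2, ← pow_mul, mul_comm e 2]
  set k := CircleGeom.fixedSubfield (K := F) p e with hk_def
  have hk : Nat.card k = p ^ e := CircleGeom.card_fixedSubfield p e he hcard
  obtain ⟨B, hB1, hB2⟩ := CircleGeom.design (K := F) k
  haveI : Fintype (CircleGeom.Pt F) := Fintype.ofFinite _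
  have hptc : Fintype.card (CircleGeom.Pt F) = (p ^ e) ^ 2 + 1 := by
    rw [← Nat.card_eq_fintype_card, CircleGeom.design_card k, Nat.card_eq_fintype_card, hcard]
  let φ : CircleGeom.Pt F ≃ Fin ((p ^ e) ^ 2 + 1) := Fintype.equivFinOfCardEq hptc
  refine ⟨B.image (fun Cb => Cb.map φ.toEmbedding), ?_, ?_⟩
  · intro b hb
    rw [Finset.mem_image] at hb
    obtain ⟨Cb, hCb, rfl⟩ := hb
    rw [Finset.card_map, hB1 Cb hCb, hk]
  · intro T hT
    rw [Finset.card_eq_three] at hT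
    obtain ⟨a, b, c, hab, hac, hbc, rfl⟩ := hT
    have hxy : φ.symm a ≠ φ.symm b := fun h => hab (φ.symm.injective h)
    have hxz : φ.symm a ≠ φ.symm c := fun h => hac (φ.symm.injective h)
    have hyz : φ.symm b ≠ φ.symm c := fun h => hbc (φ.symm.injective h)
    obtain ⟨Cb, ⟨hCbB, hx, hy, hz⟩, huniq⟩ := hB2 (φ.symm a) (φ.symm b) (φ.symm c) hxy hxz hyz
    refine ⟨Cb.map φ.toEmbedding, ⟨Finset.mem_image_of_mem _ hCbB, ?_⟩, ?_⟩
    · intro t ht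
      simp only [Finset.mem_insert, Finset.mem_singleton] at ht
      rw [Finset.mem_map_equiv]
      rcases ht with rfl | rfl | rfl
      · exact hx
      · exact hy
      · exact hz
    · rintro b' ⟨hb'B, hsub⟩
      rw [Finset.mem_image] at hb'B
      obtain ⟨Cb', hCb', rfl⟩ := hb'B
      have hmem : ∀ t : Fin ((p ^ e) ^ 2 + 1),
          t ∈ Cb'.map φ.toEmbedding ↔ φ.symm t ∈ Cb' := fun t => Finset.mem_map_equiv
      have ha' : φ.symm a ∈ Cb' := (hmem a).1 (hsub (by simp))
      have hb'' : φ.symm b ∈ Cb' := (hmem b).1 (hsub (by simp))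
      have hc' : φ.symm c ∈ Cb' := (hmem c).1 (hsub (by simp))
      rw [huniq Cb' ⟨hCb', ha', hb'', hc'⟩]
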